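/- Let N ≥ 2 and λ > 0. Assume w : ℝ^N → ℝ is continuous, positive, radially symmetric with a nonincreasing radial profile, and satisfies lim_{|x|→∞} w(x)|x|^{(N−1)/2} e^{√λ|x|} = σ for some σ > 0. Assume f : ℝ → ℝ is continuous, f(t) = 0 for t ≤ 0, f(t) > 0 for t > 0, and t ↦ f(t)/t is nondecreasing on (0,∞). Let x₀, y ∈ ℝ^N with |x₀| = 1 and |y − x₀| = 2. Then for every δ > 0 there exist C > 0 and R₀ > 0 such that for all R ≥ R₀ and all τ₁, τ₂ ≥ δ: ∫_{ℝ^N} f(τ₁ w(x − Rx₀)) τ₂ w(x − Ry) dx ≥ C min{τ₁, τ₂} R^{−(N−1)/2} e^{−2R√λ}. -/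

import Mathlib

open MeasureTheory Filter Metric

theorem aux_exp_int_stmt8 (N : ℕ) (s : ℝ) (hs : 0 < s) :
    Integrable (fun x : EuclideanSpace ℝ (Fin N) => Real.exp (-(s * ‖x‖))) := by
  set n : ℕ := N + 1 with hn
  have hdim : (Module.finrank ℝ (EuclideanSpace ℝ (Fin N)) : ℝ) < (n : ℝ) := by
    rw [finrank_euclideanSpace]; simp [hn]
  set K : ℝ := n.factorial * Real.exp s / s ^ n with hK
  have key : ∀ t : ℝ, 0 ≤ t → Real.exp (-(s * t)) ≤ K * (1 + t) ^ (-(n : ℝ)) := by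
    intro t ht
    have h1t : (0:ℝ) < 1 + t := by linarith
    have hfa : (0:ℝ) < n.factorial := by exact_mod_cast n.factorial_pos
    have hsn : (0:ℝ) < s ^ n := by positivity
    have h1 : (s * (1 + t)) ^ n / (n.factorial : ℝ) ≤ Real.exp (s * (1 + t)) :=
      Real.pow_div_factorial_le_exp _ (by positivity) n
    have h2 : Real.exp (s * (1 + t)) = Real.exp s * Real.exp (s * t) := by
      rw [← Real.exp_add]; ring_nf
    have hb : (1 + t) ^ n ≤ K * Real.exp (s * t) := by
      rw [hK, div_mul_eq_mul_div, le_div_iff₀ hsn]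
      rw [div_le_iff₀ hfa, h2, mul_pow] at h1
      nlinarith [h1]
    have h3 : (1 + t) ^ (-(n : ℝ)) = ((1 + t) ^ n)⁻¹ := by
      rw [Real.rpow_neg h1t.le, Real.rpow_natCast]
    rw [h3, mul_comm K, ← div_eq_inv_mul, le_div_iff₀ (by positivity)]
    calc Real.exp (-(s * t)) * (1 + t) ^ n
        ≤ Real.exp (-(s * t)) * (K * Real.exp (s * t)) :=
          mul_le_mul_of_nonneg_left hb (Real.exp_nonneg _)
      _ = K * (Real.exp (-(s * t)) * Real.exp (s * t)) := by ring
      _ = K := by rw [← Real.exp_add]; simp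
  have hint : Integrable (fun x : EuclideanSpace ℝ (Fin N) => K * (1 + ‖x‖) ^ (-(n : ℝ))) :=
    (integrable_one_add_norm hdim).const_mul K
  refine hint.mono' ?_ ?_
  · exact (Real.continuous_exp.comp
      (continuous_const.mul continuous_norm).neg).aestronglyMeasurable
  filter_upwards with x
  rw [Real.norm_eq_abs, abs_of_nonneg (Real.exp_nonneg _)]
  exact key ‖x‖ (norm_nonneg x)

theorem stmt8 (N : ℕ) (hN : 2 ≤ N) (lam : ℝ) (hlam : 0 < lam)
    (w : EuclideanSpace ℝ (Fin N) → ℝ) (σ : ℝ) (hσ : 0 < σ)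
    (hwcont : Continuous w) (hwpos : ∀ x, 0 < w x)
    (φ : ℝ → ℝ) (hφrad : ∀ x, w x = φ ‖x‖) (hφanti : AntitoneOn φ (Set.Ici 0))
    (hwlim : Tendsto
      (fun x => w x * ‖x‖ ^ (((N : ℝ) - 1) / 2) * Real.exp (Real.sqrt lam * ‖x‖))
      (comap (fun x : EuclideanSpace ℝ (Fin N) => ‖x‖) atTop) (nhds σ))
    (f : ℝ → ℝ) (hfcont : Continuous f)
    (hf0 : ∀ t ≤ (0:ℝ), f t = 0) (hfpos : ∀ t > (0:ℝ), 0 < f t)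
    (hfmono : MonotoneOn (fun t => f t / t) (Set.Ioi 0))
    (x₀ y : EuclideanSpace ℝ (Fin N)) (hx₀ : ‖x₀‖ = 1) (hy : ‖y - x₀‖ = 2) :
    ∀ δ > (0:ℝ), ∃ C > (0:ℝ), ∃ R₀ > (0:ℝ), ∀ R ≥ R₀, ∀ τ₁ ≥ δ, ∀ τ₂ ≥ δ,
      C * min τ₁ τ₂ * R ^ (-(((N : ℝ) - 1) / 2)) * Real.exp (-(2 * R * Real.sqrt lam)) ≤
        ∫ x, f (τ₁ * w (x - R • x₀)) * (τ₂ * w (x - R • y)) := by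
  intro δ hδ
  set s : ℝ := Real.sqrt lam with hsdef
  have hs0 : 0 < s := Real.sqrt_pos.2 hlam
  set p : ℝ := ((N:ℝ) - 1) / 2 with hpdef
  have hN1 : (1:ℝ) ≤ (N:ℝ) - 1 := by
    have : (2:ℝ) ≤ (N:ℝ) := by exact_mod_cast hN
    linarith
  have hp0 : 0 ≤ p := by rw [hpdef]; linarith
  have hNpos : 0 < N := by omega
  set e : EuclideanSpace ℝ (Fin N) := EuclideanSpace.single (⟨0, hNpos⟩ : Fin N) (1:ℝ)
    with hedef
  have he : ‖e‖ = 1 := by rw [hedef, EuclideanSpace.norm_single]; norm_num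
  have hφeq : ∀ r : ℝ, 0 ≤ r → φ r = w (r • e) := by
    intro r hr
    rw [hφrad (r • e), norm_smul, he, Real.norm_eq_abs, abs_of_nonneg hr, mul_one]
  have hφpos : ∀ r : ℝ, 0 ≤ r → 0 < φ r := fun r hr => (hφeq r hr) ▸ hwpos _
  have hw0 : ∀ z, w z ≤ w 0 := by
    intro z
    rw [hφrad z, hφrad 0, norm_zero]
    exact hφanti Set.self_mem_Ici (Set.mem_Ici.2 (norm_nonneg z)) (norm_nonneg z)
  -- asymptotics
  obtain ⟨A, hA⟩ : ∃ A : ℝ, ∀ x : EuclideanSpace ℝ (Fin N), A ≤ ‖x‖ →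
      σ/2 < w x * ‖x‖ ^ p * Real.exp (s * ‖x‖) ∧
      w x * ‖x‖ ^ p * Real.exp (s * ‖x‖) < 2*σ := by
    have h1 := hwlim.eventually (eventually_gt_nhds (by linarith : σ/2 < σ))
    have h2 := hwlim.eventually (eventually_lt_nhds (by linarith : σ < 2*σ))
    have h3 := h1.and h2
    rw [eventually_comap, eventually_atTop] at h3
    obtain ⟨A, hA⟩ := h3
    exact ⟨A, fun x hx => hA ‖x‖ hx x rfl⟩
  set B : ℝ := max A 1 with hBdef
  have hB1 : (1:ℝ) ≤ B := le_max_right _ _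
  set C₂ : ℝ := max (w 0 * Real.exp (s * B)) (2*σ) with hC2def
  have hC2pos : 0 < C₂ := lt_of_lt_of_le (by linarith) (le_max_right _ _)
  have hwup : ∀ z : EuclideanSpace ℝ (Fin N), w z ≤ C₂ * Real.exp (-(s * ‖z‖)) := by
    intro z
    rcases le_or_gt ‖z‖ B with hz | hz
    · calc w z ≤ w 0 := hw0 z
        _ = (w 0 * Real.exp (s*B)) * Real.exp (-(s*B)) := by
          rw [mul_assoc, ← Real.exp_add]; simp
        _ ≤ C₂ * Real.exp (-(s * ‖z‖)) := by
          apply mul_le_mul (le_max_left _ _) (Real.exp_le_exp.2 (by nlinarith))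
            (Real.exp_nonneg _) hC2pos.le
    · have hzA : A ≤ ‖z‖ := le_trans (le_max_left A 1) hz.le
      obtain ⟨-, hup⟩ := hA z hzA
      have hz1 : (1:ℝ) ≤ ‖z‖ := le_trans hB1 hz.le
      have hzpos : (0:ℝ) < ‖z‖ := by linarith
      have h1p : (1:ℝ) ≤ ‖z‖ ^ p := Real.one_le_rpow hz1 hp0
      have hE : (0:ℝ) < Real.exp (s*‖z‖) := Real.exp_pos _
      have hup' : w z * (‖z‖^p * Real.exp (s*‖z‖)) < 2*σ := by rw [← mul_assoc]; exact hup
      have hw' : w z < 2*σ / (‖z‖^p * Real.exp (s*‖z‖)) := by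
        rw [lt_div_iff₀ (by positivity)]; exact hup'
      calc w z ≤ 2*σ / (‖z‖^p * Real.exp (s*‖z‖)) := hw'.le
        _ ≤ 2*σ / Real.exp (s*‖z‖) := by
          apply div_le_div_of_nonneg_left (by linarith) hE
          nlinarith [hE]
        _ = 2*σ * Real.exp (-(s*‖z‖)) := by rw [Real.exp_neg]; ring
        _ ≤ C₂ * Real.exp (-(s*‖z‖)) :=
          mul_le_mul_of_nonneg_right (le_max_right _ _) (Real.exp_nonneg _)
  have hexpint := aux_exp_int_stmt8 N s hs0
  -- facts about f
  have hfnonneg : ∀ t, 0 ≤ f t := by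
    intro t; rcases le_or_gt t 0 with h|h
    · rw [hf0 t h]
    · exact (hfpos t h).le
  have hfle : ∀ a b : ℝ, 0 < a → a ≤ b → f a ≤ f b := by
    intro a b ha hab
    have hb : 0 < b := lt_of_lt_of_le ha hab
    have h := hfmono (Set.mem_Ioi.2 ha) (Set.mem_Ioi.2 hb) hab
    have h1 : f a / a * a = f a := by field_simp
    have h2 : f b / b * b = f b := by field_simp
    have hnn : 0 ≤ f b / b := div_nonneg (hfnonneg b) hb.le
    have k1 : f a / a * a ≤ f b / b * a := mul_le_mul_of_nonneg_right h ha.le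
    have k2 : f b / b * a ≤ f b / b * b := mul_le_mul_of_nonneg_left hab hnn
    linarith
  -- constants
  have hφ1pos : 0 < φ 1 := hφpos 1 zero_le_one
  set c₁ : ℝ := f (δ * φ 1) with hc1def
  have hc1pos : 0 < c₁ := hfpos _ (by positivity)
  set V : ℝ := (volume (ball (0 : EuclideanSpace ℝ (Fin N)) 1)).toReal with hVdef
  have hVpos : 0 < V :=
    ENNReal.toReal_pos (measure_ball_pos volume 0 one_pos).ne' measure_ball_lt_top.ne
  refine ⟨c₁ * V * (σ/2) * (3:ℝ) ^ (-p) * Real.exp (-s), by positivity,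
    max A 1, lt_of_lt_of_le one_pos (le_max_right A 1), ?_⟩
  intro R hR τ₁ hτ₁ τ₂ hτ₂
  have hR1 : (1:ℝ) ≤ R := le_trans (le_max_right A 1) hR
  have hRA : A ≤ R := le_trans (le_max_left A 1) hR
  have hR0 : (0:ℝ) < R := lt_of_lt_of_le one_pos hR1
  have hτ₁0 : 0 < τ₁ := lt_of_lt_of_le hδ hτ₁
  have hτ₂0 : 0 < τ₂ := lt_of_lt_of_le hδ hτ₂
  set g : EuclideanSpace ℝ (Fin N) → ℝ :=
    fun x => f (τ₁ * w (x - R • x₀)) * (τ₂ * w (x - R • y)) with hgdef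
  have hgcont : Continuous g := by
    apply Continuous.mul
    · exact hfcont.comp (continuous_const.mul (hwcont.comp (continuous_id.sub continuous_const)))
    · exact continuous_const.mul (hwcont.comp (continuous_id.sub continuous_const))
  have hgnn : ∀ x, 0 ≤ g x := fun x =>
    mul_nonneg (hfnonneg _) (mul_nonneg hτ₂0.le (hwpos _).le)
  obtain ⟨tM, htM, hM'⟩ := (isCompact_Icc (a := (0:ℝ)) (b := τ₁ * w 0)).exists_isMaxOn
    (Set.nonempty_Icc.2 (mul_nonneg hτ₁0.le (hwpos 0).le)) hfcont.continuousOn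
  have hM : ∀ t ∈ Set.Icc (0:ℝ) (τ₁ * w 0), f t ≤ f tM := fun t ht => hM' ht
  set M := f tM with hMdef
  have hM0 : 0 ≤ M := hfnonneg tM
  have hgint : Integrable g := by
    have hint : Integrable
        (fun x : EuclideanSpace ℝ (Fin N) =>
          (M * τ₂ * C₂) * Real.exp (-(s * ‖x - R • y‖))) :=
      (hexpint.comp_sub_right (R • y)).const_mul (M * τ₂ * C₂)
    refine hint.mono' hgcont.aestronglyMeasurable ?_
    filter_upwards with x
    rw [Real.norm_eq_abs, abs_of_nonneg (hgnn x)]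
    have h1 : f (τ₁ * w (x - R • x₀)) ≤ M := by
      apply hM
      exact ⟨mul_nonneg hτ₁0.le (hwpos _).le, mul_le_mul_of_nonneg_left (hw0 _) hτ₁0.le⟩
    have h2 : w (x - R • y) ≤ C₂ * Real.exp (-(s * ‖x - R • y‖)) := hwup _
    calc g x ≤ M * (τ₂ * (C₂ * Real.exp (-(s * ‖x - R • y‖)))) := by
          apply mul_le_mul h1 (mul_le_mul_of_nonneg_left h2 hτ₂0.le)
            (mul_nonneg hτ₂0.le (hwpos _).le) hM0
      _ = (M * τ₂ * C₂) * Real.exp (-(s * ‖x - R • y‖)) := by ring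
  -- pointwise lower bound on the ball
  have hφRpos : 0 < φ (2*R+1) := hφpos _ (by linarith)
  have hball : ∀ x ∈ ball (R • x₀) 1, c₁ * (τ₂ * φ (2*R+1)) ≤ g x := by
    intro x hx
    rw [mem_ball, dist_eq_norm] at hx
    have hn1 : ‖x - R • x₀‖ ≤ 1 := hx.le
    have hw1 : φ 1 ≤ w (x - R • x₀) := by
      rw [hφrad]
      exact hφanti (Set.mem_Ici.2 (norm_nonneg _)) (Set.mem_Ici.2 zero_le_one) hn1
    have hf1 : c₁ ≤ f (τ₁ * w (x - R • x₀)) := by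
      apply hfle _ _ (by positivity)
      calc δ * φ 1 ≤ τ₁ * φ 1 := mul_le_mul_of_nonneg_right hτ₁ hφ1pos.le
        _ ≤ τ₁ * w (x - R • x₀) := mul_le_mul_of_nonneg_left hw1 hτ₁0.le
    have h2' : ‖R • x₀ - R • y‖ = R * 2 := by
      rw [← smul_sub, norm_smul, Real.norm_eq_abs, abs_of_pos hR0, norm_sub_rev, hy]
    have hdist : ‖x - R • y‖ ≤ 2*R + 1 := by
      calc ‖x - R • y‖ = ‖(x - R • x₀) + (R • x₀ - R • y)‖ := by rw [sub_add_sub_cancel]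
        _ ≤ ‖x - R • x₀‖ + ‖R • x₀ - R • y‖ := norm_add_le _ _
        _ ≤ 1 + R * 2 := by rw [h2']; linarith
        _ = 2*R + 1 := by ring
    have hw2 : φ (2*R+1) ≤ w (x - R • y) := by
      rw [hφrad]
      exact hφanti (Set.mem_Ici.2 (norm_nonneg _)) (Set.mem_Ici.2 (by linarith)) hdist
    calc c₁ * (τ₂ * φ (2*R+1))
        ≤ f (τ₁ * w (x - R • x₀)) * (τ₂ * φ (2*R+1)) :=
          mul_le_mul_of_nonneg_right hf1 (by positivity)
      _ ≤ f (τ₁ * w (x - R • x₀)) * (τ₂ * w (x - R • y)) :=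
          mul_le_mul_of_nonneg_left (mul_le_mul_of_nonneg_left hw2 hτ₂0.le) (hfnonneg _)
  have hmeasball : volume (ball (R • x₀) 1) = volume (ball (0:EuclideanSpace ℝ (Fin N)) 1) :=
    Measure.addHaar_ball_center volume _ _
  have step1 : c₁ * (τ₂ * φ (2*R+1)) * V ≤ ∫ x in ball (R • x₀) 1, g x := by
    have h := setIntegral_ge_of_const_le (μ := volume) measurableSet_ball
      (by rw [hmeasball]; exact measure_ball_lt_top.ne) hball hgint.integrableOn
    rw [Measure.real, hmeasball, ← hVdef, smul_eq_mul] at h; linarith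
  have step2 : ∫ x in ball (R • x₀) 1, g x ≤ ∫ x, g x :=
    setIntegral_le_integral hgint (Eventually.of_forall hgnn)
  -- lower bound for φ(2R+1)
  have hφlow : (σ/2) * ((2*R+1) ^ (-p)) * Real.exp (-(s * (2*R+1))) ≤ φ (2*R+1) := by
    have hrn : (0:ℝ) ≤ 2*R+1 := by linarith
    have hxn : ‖(2*R+1) • e‖ = 2*R+1 := by
      rw [norm_smul, he, Real.norm_eq_abs, abs_of_nonneg hrn, mul_one]
    have hAx : A ≤ ‖(2*R+1) • e‖ := by rw [hxn]; linarith
    obtain ⟨hlow, -⟩ := hA _ hAx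
    rw [hφrad ((2*R+1) • e)] at hlow
    rw [hxn] at hlow
    have hP : (0:ℝ) < (2*R+1) ^ p := Real.rpow_pos_of_pos (by linarith) p
    rw [Real.rpow_neg hrn, Real.exp_neg, mul_assoc, ← mul_inv, ← div_eq_mul_inv,
      div_le_iff₀ (by positivity)]
    calc σ/2 ≤ φ (2*R+1) * (2*R+1)^p * Real.exp (s*(2*R+1)) := hlow.le
      _ = φ (2*R+1) * ((2*R+1)^p * Real.exp (s*(2*R+1))) := by ring
  have h3R : ((3:ℝ)*R) ^ (-p) ≤ (2*R+1) ^ (-p) :=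
    Real.rpow_le_rpow_of_nonpos (by linarith) (by linarith) (neg_nonpos.2 hp0)
  have h3R' : ((3:ℝ) * R) ^ (-p) = (3:ℝ) ^ (-p) * R ^ (-p) :=
    Real.mul_rpow (by norm_num) hR0.le
  have hexp : Real.exp (-s) * Real.exp (-(2*R*s)) = Real.exp (-(s*(2*R+1))) := by
    rw [← Real.exp_add]; congr 1; ring
  have hmin : min τ₁ τ₂ ≤ τ₂ := min_le_right _ _
  have hRp : (0:ℝ) ≤ R ^ (-p) := Real.rpow_nonneg hR0.le _
  have h3p : (0:ℝ) ≤ (3:ℝ) ^ (-p) := Real.rpow_nonneg (by norm_num) _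
  calc c₁ * V * (σ/2) * (3:ℝ) ^ (-p) * Real.exp (-s) * min τ₁ τ₂ * R ^ (-p)
        * Real.exp (-(2*R*s))
      = (c₁ * V) * (min τ₁ τ₂ *
          ((σ/2) * ((3:ℝ) ^ (-p) * R ^ (-p)) * (Real.exp (-s) * Real.exp (-(2*R*s))))) := by
        ring
    _ ≤ (c₁ * V) * (τ₂ * ((σ/2) * ((2*R+1) ^ (-p)) * Real.exp (-(s*(2*R+1))))) := by
        apply mul_le_mul_of_nonneg_left _ (by positivity)
        apply mul_le_mul hmin _ _ hτ₂0.le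
        · rw [hexp]
          apply mul_le_mul_of_nonneg_right _ (Real.exp_nonneg _)
          apply mul_le_mul_of_nonneg_left _ (by linarith)
          rw [← h3R']; exact h3R
        · apply mul_nonneg (mul_nonneg (by linarith) (mul_nonneg h3p hRp))
            (mul_nonneg (Real.exp_nonneg _) (Real.exp_nonneg _))
    _ ≤ (c₁ * V) * (τ₂ * φ (2*R+1)) :=
        mul_le_mul_of_nonneg_left (mul_le_mul_of_nonneg_left hφlow hτ₂0.le) (by positivity)
    _ = c₁ * (τ₂ * φ (2*R+1)) * V := by ring
    _ ≤ ∫ x in ball (R • x₀) 1, g x := step1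
    _ ≤ ∫ x, g x := step2
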